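/- Let B be a unital C*-algebra and x ∈ B with ‖x‖ ≤ 1. Then x is positive (0 ≤ x) if and only if ‖1 − z • x‖ ≤ 1 for every complex number z with |1 − z| ≤ 1. -/

import Mathlib

set_option maxHeartbeats 1000000

open scoped NNReal

private lemma aux_align (a b : ℂ) (ha : a ≠ 0) (hb : b ≠ 0) :
    ∃ w : ℂ, ‖w‖ = 1 ∧ ‖a + w * b‖ = ‖a‖ + ‖b‖ := by
  have ha' : ‖a‖ ≠ 0 := norm_ne_zero_iff.mpr ha
  have hb' : ‖b‖ ≠ 0 := norm_ne_zero_iff.mpr hb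
  refine ⟨(‖b‖ / ‖a‖ : ℝ) * a / b, ?_, ?_⟩
  · rw [norm_div, norm_mul, Complex.norm_real, Real.norm_of_nonneg (by positivity)]
    show ‖b‖ / ‖a‖ * ‖a‖ / ‖b‖ = 1
    field_simp
  · have h0 : (‖b‖ / ‖a‖ : ℝ) * a / b * b = ((‖b‖ / ‖a‖ : ℝ) : ℂ) * a := by
      rw [div_mul_cancel₀ _ hb]
    rw [h0]
    have h1 : a + ((‖b‖ / ‖a‖ : ℝ) : ℂ) * a = ((1 + ‖b‖ / ‖a‖ : ℝ) : ℂ) * a := by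
      push_cast; ring
    rw [h1, norm_mul, Complex.norm_real, Real.norm_of_nonneg (by positivity)]
    field_simp

private lemma aux_scalar_im (ω : ℂ) (hω : ∀ z : ℂ, ‖1 - z‖ ≤ 1 → ‖1 - z * ω‖ ≤ 1) :
    ω.im = 0 := by
  rcases eq_or_ne ω 0 with rfl | hω0
  · simp
  set u : ℂ := 1 - ω with hu
  rcases eq_or_ne u 0 with hu0 | hu0
  · have : ω = 1 := by rw [hu, sub_eq_zero] at hu0; exact hu0.symm
    simp [this]
  obtain ⟨w, hw1, hw2⟩ := aux_align u (-ω) hu0 (neg_ne_zero.mpr hω0)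
  have key : ‖u‖ + ‖ω‖ ≤ 1 := by
    have h := hω (1 + w) (by simpa using hw1.le)
    have : 1 - (1 + w) * ω = u + w * (-ω) := by rw [hu]; ring
    rw [this, hw2, norm_neg] at h
    exact h
  have hsum : u + ω = 1 := by rw [hu]; ring
  have h1 : Complex.normSq u + Complex.normSq ω + 2 * (u * (starRingEnd ℂ) ω).re = 1 := by
    have := Complex.normSq_add u ω
    rw [hsum] at this
    simpa using this.symm
  have h2 : (‖u‖ + ‖ω‖)^2 ≤ 1 := by nlinarith [norm_nonneg u, norm_nonneg ω]
  have h3 : Complex.normSq u = ‖u‖^2 := (Complex.sq_norm u).symm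
  have h4 : Complex.normSq ω = ‖ω‖^2 := (Complex.sq_norm ω).symm
  have h5 : ‖u‖ * ‖ω‖ ≤ (u * (starRingEnd ℂ) ω).re := by nlinarith
  have h6 : ‖u * (starRingEnd ℂ) ω‖ = ‖u‖ * ‖ω‖ := by
    rw [norm_mul, Complex.norm_conj]
  have h7 : (u * (starRingEnd ℂ) ω).re ≤ ‖u‖ * ‖ω‖ := h6 ▸ Complex.re_le_norm _
  have h8 : (u * (starRingEnd ℂ) ω).im = 0 := by
    have hsq := Complex.sq_norm (u * (starRingEnd ℂ) ω)
    rw [h6] at hsq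
    rw [Complex.normSq_apply] at hsq
    nlinarith
  have h9 : (u * (starRingEnd ℂ) ω).im = -ω.im := by
    rw [hu]
    simp [Complex.mul_im, Complex.sub_re, Complex.sub_im]
    ring_nf
  rw [h9] at h8; linarith

private lemma aux_phi_im {B : Type*} [CStarAlgebra B] [Nontrivial B]
    (φ : B →L[ℂ] ℂ) (hφ : ‖φ‖ ≤ 1) (hφ1 : φ 1 = 1) {a : B} (ha : IsSelfAdjoint a) :
    (φ a).im = 0 := by
  set β : ℝ := (φ a).im with hβdef
  have key : ∀ t : ℝ, (β + t)^2 ≤ ‖a‖^2 + t^2 := by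
    intro t
    set w : ℂ := (t : ℂ) * Complex.I with hw
    set c : B := a + w • 1 with hc
    have hstar : star c = a + (-w) • 1 := by
      rw [hc, star_add, star_smul, star_one, ha.star_eq]
      congr 1
      rw [hw]
      simp [Complex.ext_iff]
    have hscal : (-w) * w = ((t^2 : ℝ) : ℂ) := by
      rw [hw]; push_cast
      ring_nf
      rw [Complex.I_sq]
      ring
    have hmul' : star c * c = a * a + ((-w) * w) • 1 := by
      rw [hstar, hc]
      simp only [mul_add, add_mul, smul_mul_assoc, mul_smul_comm, one_mul, mul_one,
        smul_smul]
      module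
    have hmul : star c * c = a * a + ((t^2 : ℝ) : ℂ) • 1 := by
      rw [hmul', hscal]
    have hnorm : ‖c‖^2 ≤ ‖a‖^2 + t^2 := by
      have h1 : ‖c‖^2 = ‖star c * c‖ := by
        rw [CStarRing.norm_star_mul_self]; ring
      rw [h1, hmul]
      calc ‖a * a + ((t^2 : ℝ) : ℂ) • (1 : B)‖ ≤ ‖a * a‖ + ‖((t^2 : ℝ) : ℂ) • (1 : B)‖ :=
            norm_add_le _ _
        _ ≤ ‖a‖^2 + t^2 := by
            rw [norm_smul, norm_one, mul_one]
            have : ‖((t^2 : ℝ) : ℂ)‖ = t^2 := by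
              rw [Complex.norm_real, Real.norm_of_nonneg (sq_nonneg t)]
            rw [this]
            gcongr
            exact (norm_mul_le a a).trans_eq (sq ‖a‖).symm
    have hφc : φ c = φ a + w := by
      rw [hc, map_add, map_smul, hφ1, smul_eq_mul, mul_one]
    have hφcn : ‖φ c‖ ≤ ‖c‖ := by
      calc ‖φ c‖ ≤ ‖φ‖ * ‖c‖ := φ.le_opNorm c
        _ ≤ 1 * ‖c‖ := by gcongr
        _ = ‖c‖ := one_mul _
    have him : (φ c).im = β + t := by
      rw [hφc, Complex.add_im, hw]
      simp
      exact hβdef.symm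
    have hsq : (φ c).im^2 ≤ ‖φ c‖^2 := by
      rw [Complex.sq_norm, Complex.normSq_apply]
      nlinarith [sq_nonneg (φ c).re]
    calc (β + t)^2 = (φ c).im^2 := by rw [him]
      _ ≤ ‖φ c‖^2 := hsq
      _ ≤ ‖c‖^2 := pow_le_pow_left₀ (norm_nonneg _) hφcn 2
      _ ≤ ‖a‖^2 + t^2 := hnorm
  by_contra hβ
  have hk := key (‖a‖^2 / β)
  have hexp : (β + ‖a‖^2/β)^2 = β^2 + 2*‖a‖^2 + (‖a‖^2/β)^2 := by
    field_simp; ring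
  have hβ2 : 0 < β^2 := by positivity
  nlinarith [sq_nonneg ‖a‖]

private noncomputable instance aux_ncr {B : Type*} [CStarAlgebra B] (k : B) [IsStarNormal k] :
    NormedCommRing (StarAlgebra.elemental ℂ k) :=
  { (inferInstance : NormedRing (StarAlgebra.elemental ℂ k)) with mul_comm := mul_comm }

private noncomputable instance aux_noc {B : Type*} [CStarAlgebra B] [Nontrivial B] (k : B)
    [IsStarNormal k] : NormOneClass (StarAlgebra.elemental ℂ k) :=
  ⟨show ‖((1 : StarAlgebra.elemental ℂ k) : B)‖ = 1 from by rw [OneMemClass.coe_one, norm_one]⟩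

private lemma aux_exists_functional {B : Type*} [CStarAlgebra B] [Nontrivial B] (k : B)
    [IsStarNormal k] {lam : ℂ} (hlam : lam ∈ spectrum ℂ k) :
    ∃ φ : B →L[ℂ] ℂ, ‖φ‖ ≤ 1 ∧ φ 1 = 1 ∧ φ k = lam := by
  haveI : IsClosed ((StarAlgebra.elemental ℂ k : StarSubalgebra ℂ B) : Set B) :=
    StarAlgebra.elemental.isClosed ℂ k
  set S := StarAlgebra.elemental ℂ k
  have hk' : lam ∈ spectrum ℂ (⟨k, StarAlgebra.elemental.self_mem ℂ k⟩ : S) := by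
    rw [StarSubalgebra.spectrum_eq]; exact hlam
  obtain ⟨f, hf⟩ := WeakDual.CharacterSpace.mem_spectrum_iff_exists.mp hk'
  have hfb : ∀ s : S, ‖f s‖ ≤ ‖s‖ := fun s =>
    spectrum.norm_le_norm_of_mem (AlgHom.apply_mem_spectrum
      (WeakDual.CharacterSpace.equivAlgHom f) s)
  set p : Subspace ℂ B := Subalgebra.toSubmodule S.toSubalgebra
  let g₀ : p →ₗ[ℂ] ℂ :=
    { toFun := fun x => f ⟨x.1, x.2⟩
      map_add' := fun x y => by rw [← map_add]; rfl
      map_smul' := fun c x => by rw [← map_smul]; rfl }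
  have hg₀ : ∀ x : p, ‖g₀ x‖ ≤ 1 * ‖x‖ := fun x => by
    rw [one_mul]; exact hfb ⟨x.1, x.2⟩
  let g : p →L[ℂ] ℂ := LinearMap.mkContinuous g₀ 1 hg₀
  obtain ⟨φ, hφext, hφnorm⟩ := exists_extension_norm_eq p g
  refine ⟨φ, ?_, ?_, ?_⟩
  · rw [hφnorm]; exact LinearMap.mkContinuous_norm_le g₀ zero_le_one hg₀
  · have := hφext ⟨1, one_mem S.toSubalgebra⟩
    simpa using this.trans (map_one (WeakDual.CharacterSpace.equivAlgHom f))
  · have := hφext ⟨k, StarAlgebra.elemental.self_mem ℂ k⟩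
    simpa using this.trans hf

/-- Lemma 4.1: a contraction `x` in a unital C*-algebra is positive iff
`‖1 - z • x‖ ≤ 1` for every complex number `z` with `|1 - z| ≤ 1`. -/
theorem positive_iff_norm_one_sub_smul {B : Type*} [CStarAlgebra B]
    [PartialOrder B] [StarOrderedRing B] (x : B) (hx : ‖x‖ ≤ 1) :
    0 ≤ x ↔ ∀ z : ℂ, ‖1 - z‖ ≤ 1 → ‖1 - z • x‖ ≤ 1 := by
  rcases subsingleton_or_nontrivial B with hB | hB
  · constructor
    · intro _ z _
      rw [Subsingleton.elim (1 - z • x) 0, norm_zero]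
      exact zero_le_one
    · intro _
      rw [Subsingleton.elim x 0]
  constructor
  · -- forward direction
    intro hx0 z hz
    have hsa : IsSelfAdjoint x := .of_nonneg hx0
    haveI : IsStarNormal x := hsa.isStarNormal
    have hcfc : 1 - z • x = cfc (fun μ : ℂ => 1 - z * μ) x := by
      rw [cfc_sub (fun _ : ℂ => (1:ℂ)) (fun μ : ℂ => z * μ) x, cfc_const (1 : ℂ) x,
        cfc_const_mul_id z x, map_one]
    rw [hcfc]
    refine norm_cfc_le zero_le_one fun μ hμ => ?_
    have hre : (μ.re : ℂ) = μ := (hsa.mem_spectrum_eq_re hμ).symm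
    have ht0 : 0 ≤ μ.re := by
      refine spectrum_nonneg_of_nonneg hx0 ?_
      rw [← spectrum.algebraMap_mem_iff ℂ]
      simpa [Complex.coe_algebraMap] using hre ▸ hμ
    have ht1 : μ.re ≤ 1 := by
      have := spectrum.norm_le_norm_of_mem hμ
      have h2 : μ.re ≤ ‖μ‖ := (Complex.re_le_norm μ).trans_eq rfl
      linarith
    have hdecomp : 1 - z * μ = ((1 - μ.re : ℝ) : ℂ) + (μ.re : ℂ) * (1 - z) := by
      conv_lhs => rw [← hre]
      push_cast; ring
    rw [hdecomp]
    calc ‖((1 - μ.re : ℝ) : ℂ) + (μ.re : ℂ) * (1 - z)‖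
        ≤ ‖((1 - μ.re : ℝ) : ℂ)‖ + ‖(μ.re : ℂ)‖ * ‖1 - z‖ := by
          refine (norm_add_le _ _).trans ?_
          gcongr
          exact norm_mul_le _ _
      _ ≤ (1 - μ.re) + μ.re * 1 := by
          rw [Complex.norm_real, Complex.norm_real, Real.norm_of_nonneg (by linarith),
            Real.norm_of_nonneg ht0]
          gcongr
      _ = 1 := by ring
  · -- backward direction
    intro H
    set k : B := (-(Complex.I)/2) • (x - star x) with hkdef
    have hk_sa : IsSelfAdjoint k := by
      rw [IsSelfAdjoint, hkdef, star_smul, star_sub, star_star]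
      rw [show star x - x = -(x - star x) from by rw [neg_sub], smul_neg, ← neg_smul]
      congr 1
      simp [Complex.ext_iff]
      norm_num
    haveI : IsStarNormal k := hk_sa.isStarNormal
    have hspec : ∀ lam ∈ spectrum ℂ k, lam = 0 := by
      intro lam hlam
      obtain ⟨φ, hφn, hφ1, hφk⟩ := aux_exists_functional k hlam
      have hlam_re : lam = (lam.re : ℂ) := hk_sa.mem_spectrum_eq_re hlam
      set ω : ℂ := φ x with hω
      have him : ω.im = 0 := by
        refine aux_scalar_im ω fun z hz => ?_
        have hc : φ (1 - z • x) = 1 - z * ω := by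
          rw [map_sub, map_smul, hφ1, smul_eq_mul]
        calc ‖1 - z * ω‖ = ‖φ (1 - z • x)‖ := by rw [hc]
          _ ≤ ‖φ‖ * ‖1 - z • x‖ := φ.le_opNorm _
          _ ≤ 1 * 1 := by
              have := H z hz
              gcongr
          _ = 1 := one_mul 1
      -- decompose x = h + I • k
      set h : B := ((1:ℂ)/2) • (x + star x) with hhdef
      have hh_sa : IsSelfAdjoint h := by
        rw [IsSelfAdjoint, hhdef, star_smul, star_add, star_star, add_comm (star x) x]
        congr 1
        simp [Complex.ext_iff]
      have hIk : Complex.I • k = ((1:ℂ)/2) • (x - star x) := by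
        rw [hkdef, smul_smul]
        congr 1
        linear_combination (-1/2 : ℂ) * Complex.I_mul_I
      have hx_eq : x = h + Complex.I • k := by
        rw [hIk, hhdef, smul_add, smul_sub]
        module
      have hωeq : ω = φ h + Complex.I * φ k := by
        rw [hω]
        conv_lhs => rw [hx_eq]
        simp
      have hφh_im : (φ h).im = 0 := aux_phi_im φ hφn hφ1 hh_sa
      have hlim : lam.im = 0 := by rw [hlam_re]; simp
      have hfin : ω.im = lam.re := by
        rw [hωeq, Complex.add_im, hφh_im, zero_add, Complex.mul_im, hφk]
        simp [hlim]
      rw [him] at hfin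
      rw [hlam_re, ← hfin]
      simp
    have hk0 : k = 0 := by
      have hrad : spectralRadius ℂ k = 0 := by
        rw [spectralRadius]
        refine le_antisymm ?_ zero_le
        refine iSup₂_le fun lam hlam => ?_
        simp [hspec lam hlam]
      have := hk_sa.spectralRadius_eq_nnnorm
      rw [hrad] at this
      have : ‖k‖₊ = 0 := by exact_mod_cast this.symm
      simpa using this
    have hx_sa : IsSelfAdjoint x := by
      have hsub : x - star x = 0 := by
        have h2 : (-(Complex.I)/2 : ℂ) ≠ 0 := by
          simp [div_eq_zero_iff, Complex.I_ne_zero]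
        rcases smul_eq_zero.mp (hkdef ▸ hk0) with h | h
        · exact absurd h h2
        · exact h
      rw [IsSelfAdjoint]
      rw [← sub_eq_zero]
      rw [← neg_sub x (star x), hsub, neg_zero]
    rw [nonneg_iff_isSelfAdjoint_and_quasispectrumRestricts, quasispectrumRestricts_iff_spectrumRestricts]
    refine ⟨hx_sa, ?_⟩
    have hxnn : ‖x‖₊ ≤ (1 : ℝ≥0) := by
      rw [← NNReal.coe_le_coe]
      exact_mod_cast hx
    rw [SpectrumRestricts.nnreal_iff_nnnorm hx_sa hxnn]
    have h1 : ‖(1 : B) - x‖ ≤ 1 := by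
      have := H 1 (by simp)
      rwa [one_smul] at this
    have : algebraMap ℝ B ((1 : ℝ≥0) : ℝ) - x = 1 - x := by
      rw [NNReal.coe_one, map_one]
    rw [this, ← NNReal.coe_le_coe]
    exact_mod_cast h1
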